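/- arXiv:1707.03281 — 2 statements merged into one kernel-verified Lean document; each statement's English description precedes it below -/
import Mathlib

section
/- Let X be a topological additive group, I an ideal on ω, and x, y sequences in X such that the sequence (x_n − y_n) is I*-convergent to 0. Then x and y have the same I-limit points: Λ_x(I) = Λ_y(I). -/
open Filter Topology

/-- An ideal on ω: closed under subsets and finite unions, contains all singletons,
and is not the whole power set. -/
def IsIdeal (I : Set (Set ℕ)) : Prop :=
  (∀ ⦃A B : Set ℕ⦄, A ∈ I → B ⊆ A → B ∈ I) ∧
  (∀ ⦃A B : Set ℕ⦄, A ∈ I → B ∈ I → A ∪ B ∈ I) ∧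
  (∀ n : ℕ, ({n} : Set ℕ) ∈ I) ∧ (Set.univ : Set ℕ) ∉ I

/-- A P-ideal. -/
def IsPIdeal (I : Set (Set ℕ)) : Prop :=
  IsIdeal I ∧ ∀ A : ℕ → Set ℕ, (∀ n, A n ∈ I) → ∃ B ∈ I, ∀ n, (A n \ B).Finite

/-- A G-ideal. -/
def IsGIdeal (I : Set (Set ℕ)) : Prop :=
  IsIdeal I ∧ ∀ a : ℕ → ℕ, StrictMono a → (Set.range a)ᶜ ∈ I →
    ∀ B : Set ℕ, ((a '' B)ᶜ ∈ I ↔ Bᶜ ∈ I)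

variable {X : Type*} [TopologicalSpace X]

/-- `I`-convergence of a sequence to a point. -/
def IConv (I : Set (Set ℕ)) (x : ℕ → X) (l : X) : Prop :=
  ∀ U ∈ 𝓝 l, {n | x n ∉ U} ∈ I

/-- `I*`-convergence: some subsequence indexed by a set of the dual filter converges. -/
def IStarConv (I : Set (Set ℕ)) (x : ℕ → X) (l : X) : Prop :=
  ∃ e : ℕ → ℕ, StrictMono e ∧ (Set.range e)ᶜ ∈ I ∧ Tendsto (x ∘ e) atTop (𝓝 l)

/-- The set of `I`-cluster points of a sequence. -/
def IClusterPts (I : Set (Set ℕ)) (x : ℕ → X) : Set X :=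
  {l | ∀ U ∈ 𝓝 l, {n | x n ∈ U} ∉ I}

/-- The set of `I`-limit points of a sequence. -/
def ILimitPts (I : Set (Set ℕ)) (x : ℕ → X) : Set X :=
  {l | ∃ e : ℕ → ℕ, StrictMono e ∧ Set.range e ∉ I ∧ Tendsto (x ∘ e) atTop (𝓝 l)}

lemma ideal_finite_mem {I : Set (Set ℕ)} (hI : IsIdeal I) {S : Set ℕ} (hS : S.Finite) :
    S ∈ I := by
  classical
  obtain ⟨h1, h2, h3, _⟩ := hI
  have key : ∀ t : Finset ℕ, (↑t : Set ℕ) ∈ I := by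
    intro t
    induction t using Finset.induction_on with
    | empty => rw [Finset.coe_empty]; exact h1 (h3 0) (Set.empty_subset _)
    | @insert a s _ ih =>
      rw [Finset.coe_insert, Set.insert_eq]
      exact h2 (h3 a) ih
  rw [← hS.coe_toFinset]
  exact key _

lemma sub_lemma {X : Type*} [AddGroup X] [TopologicalSpace X] [IsTopologicalAddGroup X]
    {I : Set (Set ℕ)} (hI : IsIdeal I) {x y : ℕ → X}
    (h : IStarConv I (fun n => x n - y n) 0) :
    ILimitPts I x ⊆ ILimitPts I y := by
  rintro l ⟨e, he, heI, hel⟩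
  obtain ⟨a, ha, haI, hal⟩ := h
  set S : Set ℕ := Set.range e ∩ Set.range a with hSdef
  have hSnotI : S ∉ I := by
    intro hSI
    apply heI
    refine hI.1 (hI.2.1 hSI haI) ?_
    intro n hn
    by_cases hna : n ∈ Set.range a
    · exact Or.inl ⟨hn, hna⟩
    · exact Or.inr hna
  have hSinf : S.Infinite := fun hfin => hSnotI (ideal_finite_mem hI hfin)
  have hSinf' : {n | n ∈ S}.Infinite := hSinf
  set f : ℕ → ℕ := Nat.nth (· ∈ S) with hfdef
  have hfmono : StrictMono f := Nat.nth_strictMono hSinf'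
  have hfrange : Set.range f = S := Nat.range_nth_of_infinite hSinf'
  have hfmem : ∀ n, f n ∈ S := fun n => Nat.nth_mem_of_infinite hSinf' n
  -- factor f through e
  have hge : ∀ n, ∃ m, e m = f n := fun n => (hfmem n).1
  have hga : ∀ n, ∃ m, a m = f n := fun n => (hfmem n).2
  set g : ℕ → ℕ := fun n => (hge n).choose with hgdef
  set g' : ℕ → ℕ := fun n => (hga n).choose with hg'def
  have hgeq : ∀ n, e (g n) = f n := fun n => (hge n).choose_spec
  have hg'eq : ∀ n, a (g' n) = f n := fun n => (hga n).choose_spec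
  have hgmono : StrictMono g := fun m n hmn => by
    have : e (g m) < e (g n) := by rw [hgeq, hgeq]; exact hfmono hmn
    exact he.lt_iff_lt.mp this
  have hg'mono : StrictMono g' := fun m n hmn => by
    have : a (g' m) < a (g' n) := by rw [hg'eq, hg'eq]; exact hfmono hmn
    exact ha.lt_iff_lt.mp this
  have hxf : Tendsto (x ∘ f) atTop (𝓝 l) := by
    have := hel.comp hgmono.tendsto_atTop
    convert this using 1
    funext n
    simp [Function.comp, hgeq n]
  have hsubf : Tendsto (fun n => x (f n) - y (f n)) atTop (𝓝 0) := by
    have := hal.comp hg'mono.tendsto_atTop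
    convert this using 1
    funext n
    simp [Function.comp, hg'eq n]
  have hyf : Tendsto (y ∘ f) atTop (𝓝 l) := by
    have := hsubf.neg.add hxf
    rw [neg_zero, zero_add] at this
    convert this using 1
    funext n
    show y (f n) = -(x (f n) - y (f n)) + x (f n)
    rw [neg_sub, sub_add_cancel]
  exact ⟨f, hfmono, by rw [hfrange]; exact hSnotI, hyf⟩

theorem stmt16 {X : Type*} [AddGroup X] [TopologicalSpace X] [IsTopologicalAddGroup X]
    {I : Set (Set ℕ)} (hI : IsIdeal I) {x y : ℕ → X}
    (h : IStarConv I (fun n => x n - y n) 0) :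
    ILimitPts I x = ILimitPts I y := by
  have h' : IStarConv I (fun n => y n - x n) 0 := by
    obtain ⟨a, ha, haI, hal⟩ := h
    refine ⟨a, ha, haI, ?_⟩
    have := hal.neg
    rw [neg_zero] at this
    convert this using 1
    funext n
    simp [Function.comp]
  exact Set.Subset.antisymm (sub_lemma hI h) (sub_lemma hI h')
end

section
/- Let (X, τ) be a first countable topological space and I an ideal on ω. Then a set F ⊆ X is τ-closed if and only if F = ⋃_{x ∈ F^ω} Γ_x(I); that is, τ = τ(I). -/
open Filter Topology

variable {X : Type*} [TopologicalSpace X]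

lemma isIdeal_finite_mem {I : Set (Set ℕ)} (hI : IsIdeal I) {A : Set ℕ}
    (hA : A.Finite) : A ∈ I := by
  refine Set.Finite.induction_on _ hA (hI.1 (hI.2.2.1 0) (Set.empty_subset _))
    (fun _ _ ih => ?_)
  rw [Set.insert_eq]
  exact hI.2.1 (hI.2.2.1 _) ih

lemma rhs_eq_closure {X : Type*} [TopologicalSpace X]
    [FirstCountableTopology X] {I : Set (Set ℕ)} (hI : IsIdeal I) (F : Set X) :
    {l | ∃ x : ℕ → X, (∀ n, x n ∈ F) ∧ l ∈ IClusterPts I x} = closure F := by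
  ext l
  constructor
  · rintro ⟨x, hx, hl⟩
    rw [mem_closure_iff]
    intro U hU hlU
    have := hl U (hU.mem_nhds hlU)
    have hne : {n | x n ∈ U}.Nonempty := by
      rcases Set.eq_empty_or_nonempty {n | x n ∈ U} with h | h
      · exact absurd (h ▸ isIdeal_finite_mem hI Set.finite_empty) this
      · exact h
    obtain ⟨n, hn⟩ := hne
    exact ⟨x n, hn, hx n⟩
  · intro hl
    obtain ⟨x, hx, hconv⟩ := mem_closure_iff_seq_limit.1 hl
    refine ⟨x, hx, fun U hU hmem => ?_⟩
    have hcof : {n | x n ∉ U}.Finite := by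
      obtain ⟨N, hN⟩ := Filter.eventually_atTop.1 (hconv hU)
      exact Set.Finite.subset (Set.finite_Iio N) fun n hn => by
        by_contra h
        exact hn (hN n (not_lt.1 h))
    have : (Set.univ : Set ℕ) ∈ I := by
      have h1 : {n | x n ∈ U} ∪ {n | x n ∉ U} = Set.univ := by
        ext n; by_cases h : x n ∈ U <;> simp [h]
      rw [← h1]
      exact hI.2.1 hmem (isIdeal_finite_mem hI hcof)
    exact hI.2.2.2 this

theorem stmt18 {X : Type*} [TopologicalSpace X]
    [FirstCountableTopology X] {I : Set (Set ℕ)} (hI : IsIdeal I)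
    (F : Set X) :
    IsClosed F ↔ F = {l | ∃ x : ℕ → X, (∀ n, x n ∈ F) ∧ l ∈ IClusterPts I x} := by
  rw [rhs_eq_closure hI]
  exact ⟨fun h => h.closure_eq.symm, fun h => h ▸ isClosed_closure⟩
end
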